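/- Let K be a field of characteristic 0, let L = θ⁴ + a₃θ³ + a₂θ² + a₁θ + a₀ with aᵢ ∈ K[[t]], aᵢ(0) = 0, satisfying the self-adjointness relation a₁ = θ(a₂) + (1/2)a₂a₃ − (1/2)θ²(a₃) − (3/4)a₃θ(a₃) − (1/8)a₃³. Let F ∈ 1 + tK[[t]] be the unique power series solution of L, let β ∈ 1 + tK[[t]] solve 2θβ = a₃β, and let M = K[[t]]⁴ with connection ∇ over θ determined by ∇η⁽ⁱ⁾ = η⁽ⁱ⁺¹⁾ for i ≤ 2 and ∇η⁽³⁾ = −(a₃η⁽³⁾ + a₂η⁽²⁾ + a₁η⁽¹⁾ + a₀η⁽⁰⁾). Then the element u₀ = β[Fη⁽³⁾ − (θF)η⁽²⁾ + (θ²F)η⁽¹⁾ − (θ³F)η⁽⁰⁾] + (θβ)[Fη⁽²⁾ − (θ²F)η⁽⁰⁾] + (βa₂ − θ²β)[Fη⁽¹⁾ − (θF)η⁽⁰⁾] is horizontal: ∇u₀ = 0. -/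

import Mathlib

open PowerSeries

/-- The logarithmic derivative `θ = t·d/dt` on formal power series. -/
noncomputable def theta {K : Type*} [CommRing K] (f : K⟦X⟧) : K⟦X⟧ :=
  PowerSeries.X * PowerSeries.derivative K f

lemma theta_mul {K : Type*} [CommRing K] (f g : K⟦X⟧) :
    theta (f * g) = theta f * g + f * theta g := by
  unfold theta
  rw [Derivation.leibniz]
  simp [smul_eq_mul]
  ring

lemma theta_add {K : Type*} [CommRing K] (f g : K⟦X⟧) :
    theta (f + g) = theta f + theta g := by
  unfold theta; rw [map_add]; ring

lemma theta_sub {K : Type*} [CommRing K] (f g : K⟦X⟧) :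
    theta (f - g) = theta f - theta g := by
  unfold theta; rw [map_sub]; ring

lemma theta_neg {K : Type*} [CommRing K] (f : K⟦X⟧) :
    theta (-f) = -theta f := by
  unfold theta; rw [map_neg]; ring

/-- For an order-4 Calabi-Yau operator, the explicit element `u₀` of `Λ_L` is
horizontal: `∇u₀ = 0`. -/
theorem horizontal_u0_order_four {K : Type*} [Field K] [CharZero K]
    (a0 a1 a2 a3 : K⟦X⟧) (ha : ∀ a ∈ [a0, a1, a2, a3], constantCoeff a = 0)
    (hsa : a1 = theta a2 + C (1/2 : K) * (a2 * a3) - C (1/2 : K) * theta (theta a3)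
      - C (3/4 : K) * (a3 * theta a3) - C (1/8 : K) * a3 ^ 3)
    (F : K⟦X⟧) (hF1 : constantCoeff F = 1)
    (hF : theta^[4] F + a3 * theta^[3] F + a2 * theta^[2] F + a1 * theta F + a0 * F = 0)
    (β : K⟦X⟧) (hβ1 : constantCoeff β = 1) (hβ : 2 * theta β = a3 * β)
    {M : Type*} [AddCommGroup M] [Module K⟦X⟧ M]
    (η : ℕ → M) (D : M →+ M)
    (hD : ∀ (f : K⟦X⟧) (x : M), D (f • x) = theta f • x + f • D x)
    (hη : ∀ i ≤ 2, D (η i) = η (i + 1))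
    (hη3 : D (η 3) = -(a3 • η 3 + a2 • η 2 + a1 • η 1 + a0 • η 0)) :
    D (β • (F • η 3 - theta F • η 2 + theta^[2] F • η 1 - theta^[3] F • η 0)
        + theta β • (F • η 2 - theta^[2] F • η 0)
        + (β * a2 - theta^[2] β) • (F • η 1 - theta F • η 0)) = 0 := by
  simp only [Function.iterate_succ, Function.iterate_zero, Function.comp_apply, id_eq]
    at hF ⊢
  have h0 : D (η 0) = η 1 := by simpa using hη 0 (by norm_num)
  have h1 : D (η 1) = η 2 := by simpa using hη 1 (by norm_num)
  have h2 : D (η 2) = η 3 := by simpa using hη 2 (by norm_num)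
  -- numeral facts about `C`
  have hc2 : (C (1/2 : K) : K⟦X⟧) * 2 = 1 := by
    rw [show (2 : K⟦X⟧) = (C : K →+* K⟦X⟧) 2 from (map_ofNat (C : K →+* K⟦X⟧) 2).symm, ← map_mul]; norm_num
  have hc4 : (C (3/4 : K) : K⟦X⟧) * 4 = 3 := by
    rw [show (4 : K⟦X⟧) = (C : K →+* K⟦X⟧) 4 from (map_ofNat (C : K →+* K⟦X⟧) 4).symm, ← map_mul,
      show (3 : K⟦X⟧) = (C : K →+* K⟦X⟧) 3 from (map_ofNat (C : K →+* K⟦X⟧) 3).symm]; norm_num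
  have hc8 : (C (1/8 : K) : K⟦X⟧) * 8 = 1 := by
    rw [show (8 : K⟦X⟧) = (C : K →+* K⟦X⟧) 8 from (map_ofNat (C : K →+* K⟦X⟧) 8).symm, ← map_mul]; norm_num
  have hA : 8*a1 = 8*theta a2 + 4*(a2*a3) - 4*theta (theta a3) - 6*(a3*theta a3) - a3^3 := by
    linear_combination 8*hsa + (4*(a2*a3) - 4*theta (theta a3))*hc2 - 2*(a3*theta a3)*hc4
      - a3^3*hc8
  -- derived facts about β
  have hb : theta (theta β) + theta (theta β) = theta a3 * β + a3 * theta β := by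
    have h := congrArg theta hβ
    rw [two_mul, theta_add, theta_mul] at h
    exact h
  have hB2 : 4 * theta (theta β) = 2*(theta a3*β) + a3^2*β := by
    linear_combination 2*hb + a3*hβ
  have hb' := congrArg theta hb
  rw [theta_add, theta_add, theta_mul, theta_mul] at hb'
  have hB3 : 8*theta (theta (theta β)) = 4*theta (theta a3)*β + 6*(a3*theta a3*β) + a3^3*β := by
    linear_combination 4*hb' + 4*theta a3*hβ + a3*hB2
  have h8ne : (8 : K⟦X⟧) ≠ 0 := by
    intro h
    have := congrArg (constantCoeff : K⟦X⟧ →+* K) h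
    rw [map_ofNat, map_zero] at this
    norm_num at this
  -- coefficient identities
  have e3 : theta (β * F) + (theta β * F - β * theta F) - a3 * (β * F) = 0 := by
    simp only [theta_mul]
    linear_combination F*hβ
  have e2 : theta (theta β * F - β * theta F)
      + (β * theta (theta F) + (β * a2 - theta (theta β)) * F) - a2 * (β * F) = 0 := by
    simp only [theta_sub, theta_mul]
    ring
  have e1 : theta (β * theta (theta F) + (β * a2 - theta (theta β)) * F)
      + (-(β * theta (theta (theta F))) - theta β * theta (theta F)
        - (β * a2 - theta (theta β)) * theta F) - a1 * (β * F) = 0 := by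
    have e1' : (8 : K⟦X⟧) * (theta (β * theta (theta F) + (β * a2 - theta (theta β)) * F)
        + (-(β * theta (theta (theta F))) - theta β * theta (theta F)
          - (β * a2 - theta (theta β)) * theta F) - a1 * (β * F)) = 0 := by
      simp only [theta_add, theta_sub, theta_mul]
      linear_combination 4*a2*F*hβ - F*hB3 - β*F*hA
    exact (mul_eq_zero.mp e1').resolve_left h8ne
  have e0 : theta (-(β * theta (theta (theta F))) - theta β * theta (theta F)
        - (β * a2 - theta (theta β)) * theta F) - a0 * (β * F) = 0 := by
    have e0' : (8 : K⟦X⟧) * (theta (-(β * theta (theta (theta F))) - theta β * theta (theta F)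
        - (β * a2 - theta (theta β)) * theta F) - a0 * (β * F)) = 0 := by
      simp only [theta_add, theta_sub, theta_neg, theta_mul]
      linear_combination (-8*β)*hF + (-8*theta (theta (theta F)) - 4*a2*theta F)*hβ
        + theta F*hB3 + β*theta F*hA
    exact (mul_eq_zero.mp e0').resolve_left h8ne
  -- expand D
  simp only [smul_sub, smul_add, map_add, map_sub, hD, h0, h1, h2, hη3]
  trans ((theta (β * F) + (theta β * F - β * theta F) - a3 * (β * F)) • η 3
    + (theta (theta β * F - β * theta F)
        + (β * theta (theta F) + (β * a2 - theta (theta β)) * F) - a2 * (β * F)) • η 2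
    + (theta (β * theta (theta F) + (β * a2 - theta (theta β)) * F)
        + (-(β * theta (theta (theta F))) - theta β * theta (theta F)
          - (β * a2 - theta (theta β)) * theta F) - a1 * (β * F)) • η 1
    + (theta (-(β * theta (theta (theta F))) - theta β * theta (theta F)
          - (β * a2 - theta (theta β)) * theta F) - a0 * (β * F)) • η 0)
  · simp only [theta_add, theta_sub, theta_neg, theta_mul]
    simp only [smul_add, smul_sub, smul_neg, smul_smul, add_smul, sub_smul, neg_smul, mul_add, add_mul, mul_sub, sub_mul, mul_neg, neg_mul]
    ring_nf
    abel
  · rw [e3, e2, e1, e0]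
    simp
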